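/- Let n be a positive integer and define Φ(a) = ∫₀^∞ u^{−2} ( 1 − ((1 + a^{−n}u²)(1 + aⁿu²))^{−n/4} ) du for a > 0. Then Φ(1/a) = Φ(a) for every a > 0, Φ is strictly increasing on [1, ∞), and consequently, if Φ(a) = Φ(b) for a, b > 0, then b = a or b = 1/a. -/

import Mathlib

open MeasureTheory Real Set

/-- `Φ(a) = ∫₀^∞ u⁻² (1 − ((1+a⁻ⁿu²)(1+aⁿu²))^{-n/4}) du`; up to a positive constant, the
`(n/2)`-th intrinsic volume (for even `n`) of the ellipsoid of revolution with semiaxes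
`(a,…,a,a^{1-n})`. -/
noncomputable def Phi (n : ℕ) (a : ℝ) : ℝ :=
  ∫ u in Set.Ioi (0 : ℝ), (u ^ 2)⁻¹ *
    (1 - ((1 + a ^ (-(n : ℝ)) * u ^ 2) * (1 + a ^ (n : ℝ) * u ^ 2)) ^ (-(n : ℝ) / 4))

/-- The integral as a function of `s = aⁿ + a⁻ⁿ`. -/
noncomputable def PhiAux (n : ℕ) (s : ℝ) : ℝ :=
  ∫ u in Set.Ioi (0 : ℝ), (u ^ 2)⁻¹ *
    (1 - (1 + s * u ^ 2 + u ^ 4) ^ (-(n : ℝ) / 4))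

lemma Phi_eq_aux (n : ℕ) {a : ℝ} (ha : 0 < a) :
    Phi n a = PhiAux n (a ^ (n : ℝ) + a ^ (-(n : ℝ))) := by
  have h : a ^ (-(n : ℝ)) * a ^ (n : ℝ) = 1 := by
    rw [← rpow_add ha]; simp
  unfold Phi PhiAux
  refine integral_congr_ae (Filter.Eventually.of_forall fun u => ?_)
  have hb : (1 + a ^ (-(n:ℝ)) * u ^ 2) * (1 + a ^ (n:ℝ) * u ^ 2)
      = 1 + (a ^ (n:ℝ) + a ^ (-(n:ℝ))) * u ^ 2 + u ^ 4 := by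
    linear_combination (u ^ 2 * u ^ 2) * h
  simp only [hb]

lemma one_sub_rpow_neg_le {x p : ℝ} (hx : 1 ≤ x) (hp : 0 ≤ p) :
    1 - x ^ (-p) ≤ p * (x - 1) := by
  have hx0 : 0 < x := lt_of_lt_of_le one_pos hx
  rw [rpow_def_of_pos hx0]
  have h1 : Real.log x * (-p) + 1 ≤ Real.exp (Real.log x * (-p)) := Real.add_one_le_exp _
  have h2 : Real.log x ≤ x - 1 := Real.log_le_sub_one_of_pos hx0
  have h3 : 0 ≤ Real.log x := Real.log_nonneg hx
  nlinarith

lemma base_ge_one {s u : ℝ} (hs : 0 ≤ s) : (1 : ℝ) ≤ 1 + s * u ^ 2 + u ^ 4 := by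
  nlinarith [sq_nonneg u, sq_nonneg (u ^ 2), mul_nonneg hs (sq_nonneg u)]

lemma exp_nonpos (n : ℕ) : -(n : ℝ) / 4 ≤ 0 := by
  have : (0:ℝ) ≤ (n : ℝ) / 4 := by positivity
  linarith [this]

lemma rpow_le_one' {n : ℕ} {s u : ℝ} (hs : 0 ≤ s) :
    (1 + s * u ^ 2 + u ^ 4) ^ (-(n : ℝ) / 4) ≤ 1 :=
  Real.rpow_le_one_of_one_le_of_nonpos (base_ge_one hs) (exp_nonpos n)

lemma rpow_pos' {n : ℕ} {s u : ℝ} (hs : 0 ≤ s) :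
    0 < (1 + s * u ^ 2 + u ^ 4) ^ (-(n : ℝ) / 4) :=
  Real.rpow_pos_of_pos (lt_of_lt_of_le one_pos (base_ge_one hs)) _

lemma integrandAux_nonneg {n : ℕ} {s : ℝ} (hs : 0 ≤ s) (u : ℝ) :
    0 ≤ (u ^ 2)⁻¹ * (1 - (1 + s * u ^ 2 + u ^ 4) ^ (-(n : ℝ) / 4)) := by
  have h1 := rpow_le_one' (n := n) (u := u) hs
  have h2 : (0:ℝ) ≤ (u ^ 2)⁻¹ := by positivity
  nlinarith

lemma integrableAux (n : ℕ) {s : ℝ} (hs : 0 ≤ s) :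
    IntegrableOn (fun u : ℝ => (u ^ 2)⁻¹ *
      (1 - (1 + s * u ^ 2 + u ^ 4) ^ (-(n : ℝ) / 4))) (Set.Ioi 0) := by
  set p : ℝ := (n : ℝ) / 4 with hp
  have hp0 : 0 ≤ p := by positivity
  set M : ℝ := max (2 * (p * (s + 1))) 2 with hM
  have hM0 : 0 < M := lt_of_lt_of_le two_pos (le_max_right _ _)
  have hmeas : AEStronglyMeasurable (fun u : ℝ => (u ^ 2)⁻¹ *
      (1 - (1 + s * u ^ 2 + u ^ 4) ^ (-(n : ℝ) / 4))) (volume.restrict (Set.Ioi 0)) := by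
    refine ContinuousOn.aestronglyMeasurable ?_ measurableSet_Ioi
    refine ContinuousOn.mul ?_ ?_
    · exact ((continuousOn_id.pow 2).inv₀ (fun u hu => by
        have : (0:ℝ) < u := hu
        exact pow_ne_zero 2 this.ne'))
    · refine continuousOn_const.sub (ContinuousOn.rpow_const ?_ ?_)
      · fun_prop
      · intro u _
        left
        have := base_ge_one (u := u) hs
        positivity
  have hbound : Integrable (fun u : ℝ => M * (1 + u ^ 2)⁻¹)
      (volume.restrict (Set.Ioi 0)) :=
    (integrable_inv_one_add_sq.const_mul M).restrict
  refine hbound.mono' hmeas ?_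
  rw [ae_restrict_iff' measurableSet_Ioi]
  refine Filter.Eventually.of_forall fun u hu => ?_
  have hu0 : (0:ℝ) < u := hu
  rw [Real.norm_eq_abs, abs_of_nonneg (integrandAux_nonneg hs u)]
  have hb1 := base_ge_one (u := u) hs
  have h1u2 : (0:ℝ) < 1 + u ^ 2 := by positivity
  rcases le_total u 1 with h1 | h1
  · -- small u : bound by p*(s+1)
    have key : 1 - (1 + s * u ^ 2 + u ^ 4) ^ (-(n : ℝ) / 4) ≤ p * (s * u ^ 2 + u ^ 4) := by
      have := one_sub_rpow_neg_le hb1 hp0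
      rw [show -p = -(n:ℝ)/4 by rw [hp]; ring] at this
      calc 1 - (1 + s * u ^ 2 + u ^ 4) ^ (-(n : ℝ) / 4)
          ≤ p * (1 + s * u ^ 2 + u ^ 4 - 1) := this
        _ = p * (s * u ^ 2 + u ^ 4) := by ring
    have hu2le : u ^ 2 ≤ 1 := by nlinarith
    have hu4 : u ^ 4 ≤ u ^ 2 := by
      nlinarith [mul_nonneg (sq_nonneg u) (sub_nonneg.2 hu2le)]
    have hu2 : (0:ℝ) < u ^ 2 := by positivity
    have step : (u ^ 2)⁻¹ * (1 - (1 + s * u ^ 2 + u ^ 4) ^ (-(n : ℝ) / 4))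
        ≤ p * (s + 1) := by
      have h2 : 1 - (1 + s * u ^ 2 + u ^ 4) ^ (-(n : ℝ) / 4) ≤ p * (s + 1) * u ^ 2 := by
        nlinarith [mul_nonneg hp0 (sq_nonneg u)]
      rw [inv_mul_le_iff₀ hu2]
      nlinarith
    have hfinal : p * (s + 1) ≤ M * (1 + u ^ 2)⁻¹ := by
      have h2u : 1 + u ^ 2 ≤ 2 := by nlinarith
      have hd : M / 2 ≤ M / (1 + u ^ 2) := by gcongr
      have hhalf : p * (s + 1) ≤ M / 2 := by
        have := le_max_left (2 * (p * (s + 1))) 2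
        linarith
      calc p * (s + 1) ≤ M / 2 := hhalf
        _ ≤ M / (1 + u ^ 2) := hd
        _ = M * (1 + u ^ 2)⁻¹ := div_eq_mul_inv M _
    linarith
  · -- large u : bound by u⁻²
    have step : (u ^ 2)⁻¹ * (1 - (1 + s * u ^ 2 + u ^ 4) ^ (-(n : ℝ) / 4)) ≤ (u ^ 2)⁻¹ := by
      have h2 := rpow_pos' (n := n) (u := u) hs
      have hu2 : (0:ℝ) ≤ (u ^ 2)⁻¹ := by positivity
      nlinarith
    have hu2 : (0:ℝ) < u ^ 2 := by positivity
    have hfinal : (u ^ 2)⁻¹ ≤ M * (1 + u ^ 2)⁻¹ := by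
      have hd1 : (u ^ 2)⁻¹ ≤ 2 / (1 + u ^ 2) := by
        rw [inv_eq_one_div, div_le_div_iff₀ hu2 h1u2]
        nlinarith
      have hd2 : 2 / (1 + u ^ 2) ≤ M / (1 + u ^ 2) := by
        gcongr
        exact le_max_right _ _
      calc (u ^ 2)⁻¹ ≤ 2 / (1 + u ^ 2) := hd1
        _ ≤ M / (1 + u ^ 2) := hd2
        _ = M * (1 + u ^ 2)⁻¹ := div_eq_mul_inv M _
    linarith

lemma phiAux_lt (n : ℕ) (hn : 0 < n) {s t : ℝ} (hs : 0 ≤ s) (hst : s < t) :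
    PhiAux n s < PhiAux n t := by
  have ht : 0 ≤ t := hs.trans hst.le
  have his := integrableAux n hs
  have hit := integrableAux n ht
  set g : ℝ → ℝ := fun u =>
    (u ^ 2)⁻¹ * (1 - (1 + t * u ^ 2 + u ^ 4) ^ (-(n : ℝ) / 4)) -
    (u ^ 2)⁻¹ * (1 - (1 + s * u ^ 2 + u ^ 4) ^ (-(n : ℝ) / 4)) with hg
  have hgpos : ∀ u ∈ Set.Ioi (0:ℝ), 0 < g u := by
    intro u hu
    have hu0 : (0:ℝ) < u := hu
    have hu2 : (0:ℝ) < u ^ 2 := by positivity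
    have hbase : 1 + s * u ^ 2 + u ^ 4 < 1 + t * u ^ 2 + u ^ 4 := by nlinarith
    have hbs : (0:ℝ) < 1 + s * u ^ 2 + u ^ 4 :=
      lt_of_lt_of_le one_pos (base_ge_one hs)
    have hz : -(n : ℝ) / 4 < 0 := by
      have : (0:ℝ) < (n : ℝ) := by exact_mod_cast hn
      linarith
    have hlt : (1 + t * u ^ 2 + u ^ 4) ^ (-(n : ℝ) / 4)
        < (1 + s * u ^ 2 + u ^ 4) ^ (-(n : ℝ) / 4) :=
      Real.rpow_lt_rpow_of_neg hbs hbase hz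
    have : g u = (u ^ 2)⁻¹ * ((1 + s * u ^ 2 + u ^ 4) ^ (-(n : ℝ) / 4) -
        (1 + t * u ^ 2 + u ^ 4) ^ (-(n : ℝ) / 4)) := by rw [hg]; ring
    rw [this]
    exact mul_pos (by positivity) (sub_pos.2 hlt)
  have hdiff : PhiAux n t - PhiAux n s = ∫ u in Set.Ioi (0:ℝ), g u := by
    rw [hg]
    rw [integral_sub hit his]
    rfl
  have hpos : 0 < ∫ u in Set.Ioi (0:ℝ), g u := by
    rw [integral_pos_iff_support_of_nonneg_ae
      ((ae_restrict_iff' measurableSet_Ioi).2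
        (Filter.Eventually.of_forall fun u hu => (hgpos u hu).le))
      (hit.sub his)]
    have hsub : Set.Ioi (0:ℝ) ⊆ Function.support g := fun u hu => (hgpos u hu).ne'
    calc (0 : ENNReal) < volume (Set.Ioi (0:ℝ)) := by simp [Real.volume_Ioi]
      _ = (volume.restrict (Set.Ioi (0:ℝ))) (Set.Ioi (0:ℝ)) :=
          (Measure.restrict_apply_self _ _).symm
      _ ≤ (volume.restrict (Set.Ioi (0:ℝ))) (Function.support g) := measure_mono hsub
  linarith

lemma s_strictMonoOn (n : ℕ) (hn : 0 < n) :
    StrictMonoOn (fun a : ℝ => a ^ (n : ℝ) + a ^ (-(n : ℝ))) (Set.Ici 1) := by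
  intro a ha b hb hab
  simp only [Set.mem_Ici] at ha hb
  have ha0 : (0:ℝ) < a := lt_of_lt_of_le one_pos ha
  have hb0 : (0:ℝ) < b := lt_of_lt_of_le one_pos hb
  have hn' : (0:ℝ) < (n : ℝ) := by exact_mod_cast hn
  have hx1 : 1 ≤ a ^ (n : ℝ) := Real.one_le_rpow ha hn'.le
  have hxy : a ^ (n : ℝ) < b ^ (n : ℝ) := Real.rpow_lt_rpow ha0.le hab hn'
  simp only
  rw [Real.rpow_neg ha0.le, Real.rpow_neg hb0.le]
  set x := a ^ (n : ℝ)
  set y := b ^ (n : ℝ)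
  have hx0 : (0:ℝ) < x := lt_of_lt_of_le one_pos hx1
  have hy0 : (0:ℝ) < y := hx0.trans hxy
  have h1 : x⁻¹ - y⁻¹ = (y - x) / (x * y) := by field_simp
  have hxy1 : (1:ℝ) < x * y := by nlinarith
  have h2 : (y - x) / (x * y) < y - x := div_lt_self (by linarith) hxy1
  linarith

theorem Phi_symm_strictMono
    (n : ℕ) (hn : 0 < n) :
    (∀ a : ℝ, 0 < a → Phi n (1 / a) = Phi n a) ∧
      StrictMonoOn (Phi n) (Set.Ici (1 : ℝ)) ∧
      ∀ a b : ℝ, 0 < a → 0 < b → Phi n a = Phi n b → b = a ∨ b = 1 / a := by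
  have hsymm : ∀ a : ℝ, 0 < a → Phi n (1 / a) = Phi n a := by
    intro a ha
    have ha' : (0:ℝ) < 1 / a := by positivity
    rw [Phi_eq_aux n ha', Phi_eq_aux n ha]
    congr 1
    rw [one_div, Real.inv_rpow ha.le, Real.inv_rpow ha.le, Real.rpow_neg ha.le, inv_inv]
    ring
  have hmono : StrictMonoOn (Phi n) (Set.Ici (1 : ℝ)) := by
    intro a ha b hb hab
    simp only [Set.mem_Ici] at ha hb
    have ha0 : (0:ℝ) < a := lt_of_lt_of_le one_pos ha
    have hb0 : (0:ℝ) < b := lt_of_lt_of_le one_pos hb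
    rw [Phi_eq_aux n ha0, Phi_eq_aux n hb0]
    have hs0 : (0:ℝ) ≤ a ^ (n : ℝ) + a ^ (-(n : ℝ)) := by positivity
    exact phiAux_lt n hn hs0 (s_strictMonoOn n hn ha hb hab)
  refine ⟨hsymm, hmono, ?_⟩
  intro a b ha hb heq
  have key : ∀ c : ℝ, 0 < c → (1 ≤ max c c⁻¹ ∧ Phi n (max c c⁻¹) = Phi n c) := by
    intro c hc
    constructor
    · rcases le_total c 1 with h | h
      · exact le_max_iff.2 (Or.inr ((one_le_inv₀ hc).2 h))
      · exact le_max_iff.2 (Or.inl h)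
    · rcases max_cases c c⁻¹ with ⟨h1, _⟩ | ⟨h1, _⟩
      · rw [h1]
      · rw [h1, ← one_div, hsymm c hc]
  obtain ⟨ha1, hPa⟩ := key a ha
  obtain ⟨hb1, hPb⟩ := key b hb
  have hmax : max a a⁻¹ = max b b⁻¹ :=
    hmono.injOn ha1 hb1 (by rw [hPa, hPb, heq])
  rcases max_cases a a⁻¹ with ⟨h1, _⟩ | ⟨h1, _⟩ <;>
    rcases max_cases b b⁻¹ with ⟨h2, _⟩ | ⟨h2, _⟩ <;>
      rw [h1, h2] at hmax
  · exact Or.inl hmax.symm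
  · right
    rw [one_div, hmax, inv_inv]
  · right
    rw [one_div, ← hmax]
  · exact Or.inl (inv_injective hmax).symm
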